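/- Let M be a path-connected topological space with a basepoint ∗, let f : M → M be continuous, and let k ≥ 1. Let hoP_k(f) be the subspace of the k-fold product of the path space C([0,1], M) (compact-open topology) consisting of tuples λ = (λ_0, …, λ_{k−1}) with f(λ_{i+1}(0)) = λ_i(1) for all i (indices mod k). Then every point of hoP_k(f) lies in the same path component of hoP_k(f) as some tuple λ′ satisfying λ′_i(0) = ∗ for all i (and hence λ′_i(1) = f(∗) for all i). -/

import Mathlib

open unitInterval Set

/-- Auxiliary homotopy: at time `t`, traverse `a` backwards from `a t` to `a 0`,
then `c`, then `f ∘ b` from `f (b 0)` to `f (b t)`. -/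
noncomputable def hoPAux {M : Type*} [TopologicalSpace M] (f : M → M)
    (c : C(I, M)) (a b : ℝ → M) : I × I → M := fun p =>
  if 3 * (p.2 : ℝ) ≤ (p.1 : ℝ) then a ((p.1 : ℝ) - 3 * (p.2 : ℝ))
  else if 3 * (p.2 : ℝ) ≤ 3 - (p.1 : ℝ) then
    c (projIcc 0 1 zero_le_one ((3 * (p.2 : ℝ) - (p.1 : ℝ)) / (3 - 2 * (p.1 : ℝ))))
  else f (b (3 * (p.2 : ℝ) - 3 + (p.1 : ℝ)))

theorem hoPAux_den_ne {t : I} : (3 : ℝ) - 2 * (t : ℝ) ≠ 0 := by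
  have h1 := t.2.2; nlinarith [t.2.1]

theorem hoPAux_continuous {M : Type*} [TopologicalSpace M] {f : M → M} (hf : Continuous f)
    (c : C(I, M)) {a b : ℝ → M} (ha : Continuous a) (hb : Continuous b)
    (h0 : a 0 = c 0) (h1 : f (b 0) = c 1) : Continuous (hoPAux f c a b) := by
  apply Continuous.if_le
  · fun_prop
  · apply Continuous.if_le
    · exact c.continuous.comp (continuous_projIcc.comp
        (Continuous.div (by fun_prop) (by fun_prop) fun p => hoPAux_den_ne))
    · fun_prop
    · fun_prop
    · fun_prop
    · intro p hp
      have he : (3 * (p.2 : ℝ) - (p.1 : ℝ)) / (3 - 2 * (p.1 : ℝ)) = 1 := by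
        rw [div_eq_one_iff_eq hoPAux_den_ne]; linarith
      have hb0 : 3 * (p.2 : ℝ) - 3 + (p.1 : ℝ) = 0 := by linarith
      rw [he, hb0, projIcc_right, h1]
      rfl
  · fun_prop
  · fun_prop
  · intro p hp
    have he : (3 * (p.2 : ℝ) - (p.1 : ℝ)) / (3 - 2 * (p.1 : ℝ)) = 0 := by
      rw [div_eq_zero_iff]; left; linarith
    have hle : 3 * (p.2 : ℝ) ≤ 3 - (p.1 : ℝ) := by
      have := p.1.2.2; linarith
    rw [if_pos hle, he, projIcc_left]
    have h2 : (p.1 : ℝ) - 3 * (p.2 : ℝ) = 0 := by linarith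
    rw [h2, h0]
    rfl

theorem hoPAux_zero_right {M : Type*} [TopologicalSpace M] (f : M → M)
    (c : C(I, M)) (a b : ℝ → M) (t : I) : hoPAux f c a b (t, 0) = a (t : ℝ) := by
  have h : 3 * (((0 : I)) : ℝ) ≤ (t : ℝ) := by simpa using t.2.1
  unfold hoPAux
  rw [if_pos h]
  norm_num

theorem hoPAux_one_right {M : Type*} [TopologicalSpace M] (f : M → M)
    (c : C(I, M)) (a b : ℝ → M) (h1 : f (b 0) = c 1) (t : I) :
    hoPAux f c a b (t, 1) = f (b (t : ℝ)) := by
  have ht0 := t.2.1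
  have ht1 := t.2.2
  have hn : ¬ (3 * (((1 : I)) : ℝ) ≤ (t : ℝ)) := by
    simp only [Icc.coe_one, not_le]; linarith
  rcases eq_or_lt_of_le ht0 with h | h
  · have hle : 3 * (((1 : I)) : ℝ) ≤ 3 - (t : ℝ) := by
      simp only [Icc.coe_one]; linarith
    unfold hoPAux
    rw [if_neg hn, if_pos hle]
    have he : (3 * (((1 : I)) : ℝ) - (t : ℝ)) / (3 - 2 * (t : ℝ)) = 1 := by
      rw [div_eq_one_iff_eq hoPAux_den_ne]; simp only [Icc.coe_one]; linarith
    rw [he, projIcc_right]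
    have ht : (t : ℝ) = 0 := h.symm
    rw [ht, h1]
    rfl
  · have hle : ¬ (3 * (((1 : I)) : ℝ) ≤ 3 - (t : ℝ)) := by
      simp only [Icc.coe_one, not_le]; linarith
    unfold hoPAux
    rw [if_neg hn, if_neg hle]
    norm_num

theorem hoPAux_zero_left {M : Type*} [TopologicalSpace M] (f : M → M)
    (c : C(I, M)) (a b : ℝ → M) (h0 : a 0 = c 0) (s : I) :
    hoPAux f c a b (0, s) = c s := by
  have hs0 := s.2.1
  have hs1 := s.2.2
  by_cases h : 3 * (s : ℝ) ≤ (((0 : I)) : ℝ)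
  · have hs : (s : ℝ) = 0 := by
      simp only [Icc.coe_zero] at h; linarith
    unfold hoPAux
    rw [if_pos h]
    have h2 : (((0 : I)) : ℝ) - 3 * (s : ℝ) = 0 := by
      simp only [Icc.coe_zero]; linarith
    rw [h2, h0]
    congr 1
    symm
    exact Subtype.ext (by rw [hs]; norm_num)
  · have hle : 3 * (s : ℝ) ≤ 3 - (((0 : I)) : ℝ) := by
      simp only [Icc.coe_zero]; linarith
    unfold hoPAux
    rw [if_neg h, if_pos hle]
    have he : (3 * (s : ℝ) - (((0 : I)) : ℝ)) / (3 - 2 * (((0 : I)) : ℝ)) = (s : ℝ) := by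
      simp only [Icc.coe_zero]; field_simp; ring
    rw [he, projIcc_val]

/-- The homotopy `k`-periodic point space of `f : M → M`: the subspace of
`(C(I, M))^k` of tuples `λ` with `f (λ_{i+1}(0)) = λ_i(1)` (indices mod `k`). -/
def hoP {M : Type*} [TopologicalSpace M] (f : M → M) (k : ℕ) [NeZero k] :
    Set (Fin k → C(I, M)) :=
  {lam | ∀ i : Fin k, f ((lam (i + 1)) 0) = (lam i) 1}

/-- In a path-connected space, every point of `hoP_k(f)` is joined, within
`hoP_k(f)`, to a tuple of paths all starting at the basepoint `∗` (and hence
all ending at `f(∗)`). -/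
theorem hoP_component_has_based_representative {M : Type*} [TopologicalSpace M]
    [PathConnectedSpace M] (star : M) (f : M → M) (hf : Continuous f)
    (k : ℕ) [NeZero k] (x : hoP f k) :
    ∃ y : hoP f k,
      (∀ i : Fin k, (y.1 i) 0 = star) ∧
      (∀ i : Fin k, (y.1 i) 1 = f star) ∧
      Joined x y := by
  set lam := x.1 with hlamdef
  have hlam : ∀ i : Fin k, f ((lam (i + 1)) 0) = (lam i) 1 := x.2
  let α : ∀ i : Fin k, Path ((lam i) 0) star :=
    fun i => (PathConnectedSpace.joined ((lam i) 0) star).somePath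
  have hα0 : ∀ i : Fin k, (α i).extend 0 = (lam i) 0 := fun i => by simp
  have hα1 : ∀ i : Fin k, (α i).extend 1 = star := fun i => by simp
  have h1 : ∀ i : Fin k, f ((α (i + 1)).extend 0) = (lam i) 1 := by
    intro i; rw [hα0]; exact hlam i
  let H : Fin k → C(I × I, M) := fun i =>
    ⟨hoPAux f (lam i) (α i).extend (α (i + 1)).extend,
      hoPAux_continuous hf _ (α i).continuous_extend (α (i + 1)).continuous_extend
        (by rw [hα0]) (h1 i)⟩
  have hmem : ∀ t : I, (fun i : Fin k => (H i).curry t) ∈ hoP f k := by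
    intro t i
    show f (hoPAux f (lam (i + 1)) (α (i + 1)).extend (α (i + 1 + 1)).extend (t, 0))
      = hoPAux f (lam i) (α i).extend (α (i + 1)).extend (t, 1)
    rw [hoPAux_zero_right, hoPAux_one_right f _ _ _ (h1 i)]
  refine ⟨⟨fun i => (H i).curry 1, hmem 1⟩, ?_, ?_, ?_⟩
  · intro i
    show hoPAux f (lam i) (α i).extend (α (i + 1)).extend ((1 : I), 0) = star
    rw [hoPAux_zero_right]
    simp only [Icc.coe_one]; exact hα1 i
  · intro i
    show hoPAux f (lam i) (α i).extend (α (i + 1)).extend ((1 : I), 1) = f star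
    rw [hoPAux_one_right f _ _ _ (h1 i)]
    have h2 : (α (i + 1)).extend (((1 : I)) : ℝ) = star := by
      simp only [Icc.coe_one]; exact hα1 (i + 1)
    rw [h2]
  · refine ⟨⟨⟨fun t => ⟨fun i => (H i).curry t, hmem t⟩, ?_⟩, ?_, ?_⟩⟩
    · apply Continuous.subtype_mk
      exact continuous_pi fun i => ((H i).curry).continuous
    · apply Subtype.ext
      funext i
      apply ContinuousMap.ext
      intro s
      show hoPAux f (lam i) (α i).extend (α (i + 1)).extend ((0 : I), s) = lam i s
      exact hoPAux_zero_left f _ _ _ (by rw [hα0]) s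
    · rfl
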